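/- Let ν₁ and ν₂ be probability measures on a measurable space Ω, let r : Ω → ℝ be measurable with |r(x)| ≤ U_r for all x, and let φ : Ω → ℝ^d be measurable with ‖φ(x)‖ ≤ 1 for all x. Define Jᵢ := ∫ r dνᵢ and bᵢ := ∫ r(x) φ(x) dνᵢ(x) − Jᵢ ∫ φ(x) dνᵢ(x) for i = 1, 2. Then ‖b₁ − b₂‖ ≤ 6 U_r · d_TV(ν₁, ν₂). -/

import Mathlib

open MeasureTheory

/-- Total variation distance between two measures:
`d_TV(μ, ν) = sup_{A measurable} |μ(A) − ν(A)|`. -/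
noncomputable def tvDist {Ω : Type*} [MeasurableSpace Ω] (μ ν : Measure Ω) : ℝ :=
  ⨆ A : {A : Set Ω // MeasurableSet A}, |(μ A.1).toReal - (ν A.1).toReal|

lemma tvDist_bddAbove {Ω : Type*} [MeasurableSpace Ω] (μ ν : Measure Ω)
    [IsProbabilityMeasure μ] [IsProbabilityMeasure ν] :
    BddAbove (Set.range fun A : {A : Set Ω // MeasurableSet A} =>
      |(μ A.1).toReal - (ν A.1).toReal|) := by
  refine ⟨2, ?_⟩
  rintro x ⟨A, rfl⟩
  have h1 : (μ A.1).toReal ≤ 1 := by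
    have := prob_le_one (μ := μ) (s := A.1)
    simpa using ENNReal.toReal_le_of_le_ofReal zero_le_one (by simpa)
  have h2 : (ν A.1).toReal ≤ 1 := by
    have := prob_le_one (μ := ν) (s := A.1)
    simpa using ENNReal.toReal_le_of_le_ofReal zero_le_one (by simpa)
  have h3 : 0 ≤ (μ A.1).toReal := ENNReal.toReal_nonneg
  have h4 : 0 ≤ (ν A.1).toReal := ENNReal.toReal_nonneg
  rw [abs_sub_le_iff]; constructor <;> linarith

lemma abs_measure_sub_le_tvDist {Ω : Type*} [MeasurableSpace Ω] (μ ν : Measure Ω)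
    [IsProbabilityMeasure μ] [IsProbabilityMeasure ν] {A : Set Ω} (hA : MeasurableSet A) :
    |(μ A).toReal - (ν A).toReal| ≤ tvDist μ ν :=
  le_ciSup (tvDist_bddAbove μ ν) ⟨A, hA⟩

/-- Key lemma: for bounded measurable `f`,
`‖∫ f dν₁ − ∫ f dν₂‖ ≤ 2 C d_TV(ν₁, ν₂)`. -/
lemma norm_integral_sub_integral_le {Ω : Type*} [MeasurableSpace Ω]
    {E : Type*} [NormedAddCommGroup E] [NormedSpace ℝ E]
    (ν₁ ν₂ : Measure Ω) [IsProbabilityMeasure ν₁] [IsProbabilityMeasure ν₂]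
    {f : Ω → E} (hf : StronglyMeasurable f) {C : ℝ} (hC : ∀ x, ‖f x‖ ≤ C) :
    ‖(∫ x, f x ∂ν₁) - ∫ x, f x ∂ν₂‖ ≤ 2 * C * tvDist ν₁ ν₂ := by
  set μ : Measure Ω := ν₁ + ν₂ with hμ
  have h₁ : ν₁ ≪ μ := Measure.absolutelyContinuous_of_le (Measure.le_add_right le_rfl)
  have h₂ : ν₂ ≪ μ := Measure.absolutelyContinuous_of_le (Measure.le_add_left le_rfl)
  set g₁ : Ω → ℝ := fun x => (ν₁.rnDeriv μ x).toReal with hg₁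
  set g₂ : Ω → ℝ := fun x => (ν₂.rnDeriv μ x).toReal with hg₂
  have hg₁m : Measurable g₁ := (Measure.measurable_rnDeriv _ _).ennreal_toReal
  have hg₂m : Measurable g₂ := (Measure.measurable_rnDeriv _ _).ennreal_toReal
  have hg₁i : Integrable g₁ μ := Measure.integrable_toReal_rnDeriv
  have hg₂i : Integrable g₂ μ := Measure.integrable_toReal_rnDeriv
  have hrw₁ : ∫ x, f x ∂ν₁ = ∫ x, g₁ x • f x ∂μ := (integral_rnDeriv_smul h₁).symm
  have hrw₂ : ∫ x, f x ∂ν₂ = ∫ x, g₂ x • f x ∂μ := (integral_rnDeriv_smul h₂).symm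
  have hCnn : 0 ≤ C := le_trans (norm_nonneg _) (hC (Classical.choice
    (by
      by_contra h
      rw [not_nonempty_iff] at h
      have : (ν₁ : Measure Ω) Set.univ = 1 := measure_univ
      rw [Set.univ_eq_empty_iff.mpr h, measure_empty] at this
      exact zero_ne_one this)))
  have hg₁nn : ∀ x, 0 ≤ g₁ x := fun x => ENNReal.toReal_nonneg
  have hg₂nn : ∀ x, 0 ≤ g₂ x := fun x => ENNReal.toReal_nonneg
  have hint : ∀ (g : Ω → ℝ), Measurable g → Integrable g μ → (∀ x, 0 ≤ g x) →
      Integrable (fun x => g x • f x) μ := by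
    intro g hgm hgi hgnn
    refine Integrable.mono' (hgi.const_mul C) (hgm.stronglyMeasurable.smul hf).aestronglyMeasurable
      (ae_of_all _ fun x => ?_)
    rw [norm_smul, Real.norm_eq_abs, abs_of_nonneg (hgnn x)]
    calc g x * ‖f x‖ ≤ g x * C := by
          exact mul_le_mul_of_nonneg_left (hC x) (hgnn x)
      _ = C * g x := mul_comm _ _
  have hi₁ : Integrable (fun x => g₁ x • f x) μ := hint g₁ hg₁m hg₁i hg₁nn
  have hi₂ : Integrable (fun x => g₂ x • f x) μ := hint g₂ hg₂m hg₂i hg₂nn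
  rw [hrw₁, hrw₂, ← integral_sub hi₁ hi₂]
  have hstep : ‖∫ x, (g₁ x • f x - g₂ x • f x) ∂μ‖ ≤ ∫ x, C * |g₁ x - g₂ x| ∂μ := by
    refine norm_integral_le_of_norm_le (((hg₁i.sub hg₂i).abs).const_mul C)
      (ae_of_all _ fun x => ?_)
    have : g₁ x • f x - g₂ x • f x = (g₁ x - g₂ x) • f x := (sub_smul _ _ _).symm
    rw [this, norm_smul, Real.norm_eq_abs]
    calc |g₁ x - g₂ x| * ‖f x‖ ≤ |g₁ x - g₂ x| * C :=
          mul_le_mul_of_nonneg_left (hC x) (abs_nonneg _)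
      _ = C * |g₁ x - g₂ x| := mul_comm _ _
  refine hstep.trans ?_
  rw [integral_const_mul]
  -- Now bound ∫ |g₁ - g₂| dμ ≤ 2 * tvDist ν₁ ν₂
  set A : Set Ω := {x | g₂ x ≤ g₁ x} with hA
  have hAm : MeasurableSet A := measurableSet_le hg₂m hg₁m
  have habsi : Integrable (fun x => |g₁ x - g₂ x|) μ := (hg₁i.sub hg₂i).abs
  have hIA : ∫ x in A, |g₁ x - g₂ x| ∂μ = (ν₁ A).toReal - (ν₂ A).toReal := by
    rw [show (fun x => |g₁ x - g₂ x|) = fun x => |g₁ x - g₂ x| from rfl]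
    have : ∫ x in A, |g₁ x - g₂ x| ∂μ = ∫ x in A, (g₁ x - g₂ x) ∂μ := by
      refine setIntegral_congr_fun hAm fun x hx => ?_
      exact abs_of_nonneg (sub_nonneg.mpr hx)
    rw [this, integral_sub (hg₁i.integrableOn) (hg₂i.integrableOn),
      Measure.setIntegral_toReal_rnDeriv h₁ A, Measure.setIntegral_toReal_rnDeriv h₂ A]
    rfl
  have hIAc : ∫ x in Aᶜ, |g₁ x - g₂ x| ∂μ = (ν₂ Aᶜ).toReal - (ν₁ Aᶜ).toReal := by
    have : ∫ x in Aᶜ, |g₁ x - g₂ x| ∂μ = ∫ x in Aᶜ, (g₂ x - g₁ x) ∂μ := by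
      refine setIntegral_congr_fun hAm.compl fun x hx => ?_
      have : g₁ x < g₂ x := lt_of_not_ge hx
      rw [abs_of_neg (by linarith)]; ring
    rw [this, integral_sub (hg₂i.integrableOn) (hg₁i.integrableOn),
      Measure.setIntegral_toReal_rnDeriv h₂ Aᶜ, Measure.setIntegral_toReal_rnDeriv h₁ Aᶜ]
    rfl
  have hcompl : ∀ (ν : Measure Ω) [IsProbabilityMeasure ν],
      (ν Aᶜ).toReal = 1 - (ν A).toReal := by
    intro ν _
    have := prob_compl_eq_one_sub (μ := ν) hAm
    rw [this, ENNReal.toReal_sub_of_le (prob_le_one) (by simp)]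
    simp
  have htot : ∫ x, |g₁ x - g₂ x| ∂μ = 2 * ((ν₁ A).toReal - (ν₂ A).toReal) := by
    rw [← integral_add_compl hAm habsi, hIA, hIAc, hcompl ν₁, hcompl ν₂]; ring
  have hle : ∫ x, |g₁ x - g₂ x| ∂μ ≤ 2 * tvDist ν₁ ν₂ := by
    rw [htot]
    have h1 : (ν₁ A).toReal - (ν₂ A).toReal ≤ |(ν₁ A).toReal - (ν₂ A).toReal| := le_abs_self _
    have h2 := abs_measure_sub_le_tvDist ν₁ ν₂ hAm
    linarith
  calc C * ∫ x, |g₁ x - g₂ x| ∂μ ≤ C * (2 * tvDist ν₁ ν₂) :=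
        mul_le_mul_of_nonneg_left hle hCnn
    _ = 2 * C * tvDist ν₁ ν₂ := by ring

/-- With `J_i := ∫ r dν_i` and `b_i := ∫ r φ dν_i − J_i ∫ φ dν_i`, where `|r| ≤ U_r`
and `‖φ‖ ≤ 1`, one has `‖b₁ − b₂‖ ≤ 6 U_r · d_TV(ν₁, ν₂)`. -/
theorem norm_b_sub_b_le_tvDist {Ω : Type*} [MeasurableSpace Ω] {d : ℕ}
    (ν₁ ν₂ : Measure Ω) [IsProbabilityMeasure ν₁] [IsProbabilityMeasure ν₂]
    (r : Ω → ℝ) (hrm : Measurable r) (Ur : ℝ) (hr : ∀ x, |r x| ≤ Ur)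
    (φ : Ω → EuclideanSpace ℝ (Fin d)) (hφm : Measurable φ) (hφ : ∀ x, ‖φ x‖ ≤ 1) :
    ‖((∫ x, r x • φ x ∂ν₁) - (∫ x, r x ∂ν₁) • ∫ x, φ x ∂ν₁) -
        ((∫ x, r x • φ x ∂ν₂) - (∫ x, r x ∂ν₂) • ∫ x, φ x ∂ν₂)‖ ≤
      6 * Ur * tvDist ν₁ ν₂ := by
  have hΩ : Nonempty Ω := by
    by_contra h
    rw [not_nonempty_iff] at h
    have : (ν₁ : Measure Ω) Set.univ = 1 := measure_univ
    rw [Set.univ_eq_empty_iff.mpr h, measure_empty] at this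
    exact zero_ne_one this
  have hUr : 0 ≤ Ur := le_trans (abs_nonneg _) (hr (Classical.choice hΩ))
  set T := tvDist ν₁ ν₂ with hT
  set I₁ := ∫ x, r x • φ x ∂ν₁
  set I₂ := ∫ x, r x • φ x ∂ν₂
  set J₁ := ∫ x, r x ∂ν₁
  set J₂ := ∫ x, r x ∂ν₂
  set P₁ := ∫ x, φ x ∂ν₁
  set P₂ := ∫ x, φ x ∂ν₂
  have hrφ : ∀ x, ‖r x • φ x‖ ≤ Ur := fun x => by
    rw [norm_smul, Real.norm_eq_abs]
    calc |r x| * ‖φ x‖ ≤ Ur * 1 := mul_le_mul (hr x) (hφ x) (norm_nonneg _) hUr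
      _ = Ur := mul_one _
  have hI : ‖I₁ - I₂‖ ≤ 2 * Ur * T :=
    norm_integral_sub_integral_le ν₁ ν₂ (hrm.stronglyMeasurable.smul hφm.stronglyMeasurable) hrφ
  have hJ : ‖J₁ - J₂‖ ≤ 2 * Ur * T := by
    have := norm_integral_sub_integral_le ν₁ ν₂ (E := ℝ) hrm.stronglyMeasurable
      (C := Ur) (fun x => by simpa using hr x)
    simpa using this
  have hP : ‖P₁ - P₂‖ ≤ 2 * 1 * T :=
    norm_integral_sub_integral_le ν₁ ν₂ hφm.stronglyMeasurable (C := 1) hφ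
  have hP₁ : ‖P₁‖ ≤ 1 := by
    calc ‖P₁‖ ≤ ∫ x, ‖φ x‖ ∂ν₁ := norm_integral_le_integral_norm _
      _ ≤ ∫ x, (1 : ℝ) ∂ν₁ := by
          refine integral_mono_of_nonneg (ae_of_all _ fun x => norm_nonneg _)
            (integrable_const 1) (ae_of_all _ hφ)
      _ = 1 := by simp
  have hJ₂ : |J₂| ≤ Ur := by
    calc |J₂| ≤ ∫ x, |r x| ∂ν₂ := by
          simpa [Real.norm_eq_abs] using norm_integral_le_integral_norm (μ := ν₂) r
      _ ≤ ∫ x, Ur ∂ν₂ := by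
          refine integral_mono_of_nonneg (ae_of_all _ fun x => abs_nonneg _)
            (integrable_const Ur) (ae_of_all _ hr)
      _ = Ur := by simp
  have hTnn : 0 ≤ T := by
    have := abs_measure_sub_le_tvDist ν₁ ν₂ (MeasurableSet.empty (α := Ω))
    simp at this
    linarith [abs_nonneg ((ν₁ (∅ : Set Ω)).toReal - (ν₂ (∅ : Set Ω)).toReal),
      abs_measure_sub_le_tvDist ν₁ ν₂ (MeasurableSet.empty (α := Ω))]
  have key : (I₁ - J₁ • P₁) - (I₂ - J₂ • P₂) =
      (I₁ - I₂) - (J₁ - J₂) • P₁ - J₂ • (P₁ - P₂) := by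
    simp only [sub_smul, smul_sub]
    abel
  rw [key]
  calc ‖(I₁ - I₂) - (J₁ - J₂) • P₁ - J₂ • (P₁ - P₂)‖
      ≤ ‖(I₁ - I₂) - (J₁ - J₂) • P₁‖ + ‖J₂ • (P₁ - P₂)‖ := norm_sub_le _ _
    _ ≤ ‖I₁ - I₂‖ + ‖(J₁ - J₂) • P₁‖ + ‖J₂ • (P₁ - P₂)‖ := by
        linarith [norm_sub_le (I₁ - I₂) ((J₁ - J₂) • P₁)]
    _ ≤ 2 * Ur * T + 2 * Ur * T + 2 * Ur * T := by
        have e1 : ‖(J₁ - J₂) • P₁‖ ≤ 2 * Ur * T := by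
          rw [norm_smul, Real.norm_eq_abs]
          have hJ' : |J₁ - J₂| ≤ 2 * Ur * T := by
            simpa [Real.norm_eq_abs] using hJ
          calc |J₁ - J₂| * ‖P₁‖ ≤ (2 * Ur * T) * 1 :=
              mul_le_mul hJ' hP₁ (norm_nonneg _) (by positivity)
            _ = 2 * Ur * T := mul_one _
        have e2 : ‖J₂ • (P₁ - P₂)‖ ≤ 2 * Ur * T := by
          rw [norm_smul, Real.norm_eq_abs]
          calc |J₂| * ‖P₁ - P₂‖ ≤ Ur * (2 * 1 * T) :=
              mul_le_mul hJ₂ hP (norm_nonneg _) hUr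
            _ = 2 * Ur * T := by ring
        linarith
    _ = 6 * Ur * T := by ring
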